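/- Let U and V be two t-structures on a triangulated category T with d(U, V) < +∞. Then U is regular if and only if V is regular. -/

import Mathlib

open CategoryTheory Category Limits Pretriangulated Triangulated

namespace TStructurePaper

variable {C : Type*} [Category C] [Preadditive C] [HasZeroObject C]
  [HasShift C ℤ] [∀ (n : ℤ), (shiftFunctor C n).Additive] [Pretriangulated C]

/-- A t-structure is non-degenerate if every object of `⋂ₙ U_{≤n}` and every object
of `⋂ₙ U_{≥n}` is a zero object. -/
def IsNondegenerate (t : TStructure C) : Prop :=
  (∀ X : C, (∀ n : ℤ, t.le n X) → IsZero X) ∧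
  (∀ X : C, (∀ n : ℤ, t.ge n X) → IsZero X)

/-- A t-structure is stable if `Σ U_{≤0} = U_{≤0}`. -/
def IsStable (t : TStructure C) : Prop :=
  ∀ X : C, t.le 0 X ↔ t.le 0 (X⟦(1 : ℤ)⟧)

/-- A t-structure is hereditary if `Hom(U_{≥0}, U_{≤-2}) = 0`. -/
def IsHereditary (t : TStructure C) : Prop :=
  ∀ ⦃X Y : C⦄, t.ge 0 X → t.le (-2) Y → ∀ f : X ⟶ Y, f = 0

/-- `f` factors through some object satisfying the predicate `P`. -/
def FactorsThrough (P : C → Prop) {X Y : C} (f : X ⟶ Y) : Prop :=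
  ∃ (Z : C) (_ : P Z) (u : X ⟶ Z) (v : Z ⟶ Y), f = u ≫ v

/-- A t-structure is regular if any morphism `f : X → Y` with `Y ∈ U_{≤m}` for some `m`
which factors through an object of `U_{≥n}` for every `n` vanishes, and dually. -/
def IsRegular (t : TStructure C) : Prop :=
  (∀ ⦃X Y : C⦄, (∃ m : ℤ, t.le m Y) → ∀ f : X ⟶ Y,
      (∀ n : ℤ, FactorsThrough (t.ge n) f) → f = 0) ∧
  (∀ ⦃X Y : C⦄, (∃ m : ℤ, t.ge m X) → ∀ f : X ⟶ Y,
      (∀ n : ℤ, FactorsThrough (t.le n) f) → f = 0)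

/-- `Hom(U_{≥0}, U_{≤-(d+1)}) = 0`. -/
def HasGlDimAtMost (t : TStructure C) (d : ℕ) : Prop :=
  ∀ ⦃X Y : C⦄, t.ge 0 X → t.le (-(d + 1)) Y → ∀ f : X ⟶ Y, f = 0

/-- The global dimension of a t-structure, as an element of `ℕ∞`. -/
noncomputable def glDim (t : TStructure C) : ℕ∞ :=
  sInf {e : ℕ∞ | ∃ d : ℕ, e = d ∧ HasGlDimAtMost t d}

/-- `d(U,V) ≤ d`, i.e. `V_{≤m} ⊆ U_{≤0} ⊆ V_{≤m+d}` for some integer `m`. -/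
def DistAtMost (u v : TStructure C) (d : ℕ) : Prop :=
  ∃ m : ℤ, (∀ X : C, v.le m X → u.le 0 X) ∧ (∀ X : C, u.le 0 X → v.le (m + d) X)

/-- The distance between two t-structures, as an element of `ℕ∞`. -/
noncomputable def dist (u v : TStructure C) : ℕ∞ :=
  sInf {e : ℕ∞ | ∃ d : ℕ, e = d ∧ DistAtMost u v d}

/-- Membership of the subcategory `U_ℕ = ⋃_{n ≥ 0} U_{[-n, n]}`. -/
def InUN (t : TStructure C) (X : C) : Prop :=
  ∃ n : ℕ, t.ge (-(n : ℤ)) X ∧ t.le (n : ℤ) X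

/-- A t-structure is bounded if `⋃ₙ U_{≤n} = T = ⋃ₙ U_{≥n}`. -/
def IsBounded (t : TStructure C) : Prop :=
  (∀ X : C, ∃ n : ℤ, t.le n X) ∧ (∀ X : C, ∃ n : ℤ, t.ge n X)

/-- Membership of the heart `U₀ = U_{≤0} ∩ U_{≥0}`. -/
def InHeart (t : TStructure C) (X : C) : Prop :=
  t.le 0 X ∧ t.ge 0 X

/-- Truncation data for a t-structure: functors `τ_{≤n}` right adjoint to the inclusions
`U_{≤n} ↪ T` (with counit `ι`) and functors `τ_{≥n}` left adjoint to the inclusions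
`U_{≥n} ↪ T` (with unit `π`). -/
structure TruncData (t : TStructure C) where
  τle (n : ℤ) : C ⥤ C
  τge (n : ℤ) : C ⥤ C
  ι (n : ℤ) : τle n ⟶ 𝟭 C
  π (n : ℤ) : 𝟭 C ⟶ τge n
  le_mem (n : ℤ) (X : C) : t.le n ((τle n).obj X)
  ge_mem (n : ℤ) (X : C) : t.ge n ((τge n).obj X)
  le_adj (n : ℤ) (A X : C) (hA : t.le n A) :
    Function.Bijective (fun g : A ⟶ (τle n).obj X => g ≫ (ι n).app X)
  ge_adj (n : ℤ) (X B : C) (hB : t.ge n B) :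
    Function.Bijective (fun g : (τge n).obj X ⟶ B => (π n).app X ≫ g)

/-- The cohomological functor `Hⁿ = Σⁿ ∘ τ_{≤n} ∘ τ_{≥n}` associated to a t-structure. -/
def TruncData.H {t : TStructure C} (d : TruncData t) (n : ℤ) : C ⥤ C :=
  d.τge n ⋙ d.τle n ⋙ shiftFunctor C n


lemma zero_of_lt (t : TStructure C) {a b : ℤ} (h : a < b) {X Y : C}
    (hX : t.le a X) (hY : t.ge b Y) (f : X ⟶ Y) : f = 0 := by
  have hX' : t.le 0 (X⟦a⟧) := t.le_shift a a 0 (add_zero a) X hX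
  have hY' : t.ge 1 (Y⟦a⟧) :=
    t.ge_antitone (by omega : (1:ℤ) ≤ b - a) _ (t.ge_shift b a (b - a) (by omega) Y hY)
  have : (shiftFunctor C a).map f = 0 := t.zero' _ hX' hY'
  exact (shiftFunctor C a).map_injective (by rw [this, Functor.map_zero])

lemma le_shift_iff (t : TStructure C) (k n : ℤ) (X : C) :
    t.le (n + k) X ↔ t.le n (X⟦k⟧) := by
  constructor
  · exact fun h => t.le_shift (n + k) k n (by omega) X h
  · intro h
    exact (t.le (n + k)).prop_of_iso ((shiftEquiv C k).unitIso.symm.app X)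
      (t.le_shift n (-k) (n + k) (by omega) _ h)

lemma ge_of_orth (t : TStructure C) (n : ℤ) (X : C)
    (h : ∀ A, t.le (n - 1) A → ∀ f : A ⟶ X, f = 0) : t.ge n X := by
  obtain ⟨A, B, hA, hB, f, g, k, hT⟩ := t.exists_triangle X (n - 1) n (by omega)
  have hf : f = 0 := h A hA f
  obtain ⟨w, hw⟩ := Triangle.coyoneda_exact₂ _ (inv_rot_of_distTriang _ hT) (𝟙 A)
    (by exact (id_comp f).trans hf)
  have hw0 : w = 0 :=
    zero_of_lt t (by omega : n - 1 < n + 1) hA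
      (t.ge_shift n (-1) (n + 1) (by omega) B hB) w
  have hzA : IsZero A := by
    rw [IsZero.iff_id_eq_zero, hw, hw0, zero_comp]; rfl
  have : IsIso g := (Triangle.isZero₁_iff_isIso₂ _ hT).1 hzA
  exact (t.ge n).prop_of_iso (asIso g).symm hB

lemma le_of_orth (t : TStructure C) (n : ℤ) (X : C)
    (h : ∀ B, t.ge (n + 1) B → ∀ f : X ⟶ B, f = 0) : t.le n X := by
  obtain ⟨A, B, hA, hB, f, g, k, hT⟩ := t.exists_triangle X n (n + 1) rfl
  have hg : g = 0 := h B hB g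
  obtain ⟨w, hw⟩ := Triangle.yoneda_exact₂ _ (rot_of_distTriang _ hT) (𝟙 B)
    (by exact (comp_id g).trans hg)
  have hw0 : w = 0 :=
    zero_of_lt t (by omega : n - 1 < n + 1)
      (t.le_shift n 1 (n - 1) (by omega) A hA) hB w
  have hzB : IsZero B := by
    rw [IsZero.iff_id_eq_zero, hw, hw0, comp_zero]; rfl
  have : IsIso f := (Triangle.isZero₃_iff_isIso₁ _ hT).1 hzB
  exact (t.le n).prop_of_iso (asIso f) hA


section
variable {u v : TStructure C} {m : ℤ} {d : ℕ}
  (h1 : ∀ X : C, v.le m X → u.le 0 X) (h2 : ∀ X : C, u.le 0 X → v.le (m + d) X)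

include h1 in
lemma hLEvu (k : ℤ) (X : C) (h : v.le (m + k) X) : u.le k X := by
  rw [show (k : ℤ) = 0 + k by omega, le_shift_iff]
  exact h1 _ ((le_shift_iff v k m X).1 h)

include h2 in
lemma hLEuv (k : ℤ) (X : C) (h : u.le k X) : v.le (m + d + k) X := by
  rw [le_shift_iff]
  exact h2 _ ((le_shift_iff u k 0 X).1 (by rwa [zero_add]))

include h1 in
lemma hGEuv (k : ℤ) (X : C) (h : u.ge k X) : v.ge (k + m) X := by
  refine ge_of_orth v _ _ (fun A hA f => ?_)
  exact zero_of_lt u (by omega : k - 1 < k)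
    (hLEvu h1 (k - 1) A (by rwa [show m + (k - 1) = k + m - 1 by omega])) h f

include h2 in
lemma hGEvu (k : ℤ) (X : C) (h : v.ge k X) : u.ge (k - m - d) X := by
  refine ge_of_orth u _ _ (fun A hA f => ?_)
  exact zero_of_lt v (by omega : m + d + (k - m - d - 1) < k) (hLEuv h2 _ A hA) h f

end

lemma regular_of {u v : TStructure C} {d : ℕ} (hd : DistAtMost u v d)
    (hu : IsRegular u) : IsRegular v := by
  obtain ⟨m, h1, h2⟩ := hd
  constructor
  · rintro X Y ⟨m', hY⟩ f hf
    refine hu.1 ⟨m' - m, hLEvu h1 _ _ (by rwa [show m + (m' - m) = m' by omega])⟩ f (fun n => ?_)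
    obtain ⟨Z, hZ, a, b, hab⟩ := hf (n + m + d)
    exact ⟨Z, by simpa [show n + m + (d:ℤ) - m - d = n by omega] using hGEvu h2 _ _ hZ,
      a, b, hab⟩
  · rintro X Y ⟨m', hX⟩ f hf
    refine hu.2 ⟨m' - m - d, hGEvu h2 _ _ hX⟩ f (fun n => ?_)
    obtain ⟨Z, hZ, a, b, hab⟩ := hf (m + n)
    exact ⟨Z, hLEvu h1 n Z hZ, a, b, hab⟩

lemma distAtMost_symm {u v : TStructure C} {d : ℕ} (hd : DistAtMost u v d) :
    DistAtMost v u d := by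
  obtain ⟨m, h1, h2⟩ := hd
  refine ⟨-(m + d), fun X h => ?_, fun X h => ?_⟩
  · have := hLEuv h2 (-(m + d)) X h
    rwa [show m + (d:ℤ) + -(m + (d:ℤ)) = 0 by omega] at this
  · have := hLEvu h1 (-m) X (by rwa [show m + -m = (0:ℤ) by omega])
    rwa [show (-(m + (d:ℤ)) + (d:ℤ)) = -m by omega]


/-- If `d(U,V) < +∞`, then `U` is regular iff `V` is regular. -/
theorem statement15 (u v : TStructure C) (h : dist u v < ⊤) :
    IsRegular u ↔ IsRegular v := by
  obtain ⟨e, ⟨d, rfl, hd⟩, -⟩ := sInf_lt_iff.1 h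
  exact ⟨regular_of hd, regular_of (distAtMost_symm hd)⟩

end TStructurePaper
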